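/- Let π̆: S̆ → S be a covering map between locally compact Hausdorff spaces, let f be a homeomorphism of S and f̆ a homeomorphism of S̆ with π̆ ∘ f̆ = f ∘ π̆. If f̆ has a topological horseshoe, then f has a topological horseshoe. -/

import Mathlib

open Filter Topology Set

noncomputable section

/-- Group structure on the group of self-homeomorphisms of a topological space,
so that `f ^ n` denotes the `n`-th iterate (with `n : ℕ` or `n : ℤ`). -/
instance Homeomorph.instGroupSelf {X : Type*} [TopologicalSpace X] : Group (X ≃ₜ X) where
  mul f g := g.trans f
  one := Homeomorph.refl X
  inv := Homeomorph.symm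
  mul_assoc f g h := Homeomorph.ext fun _ => rfl
  one_mul f := Homeomorph.ext fun _ => rfl
  mul_one f := Homeomorph.ext fun _ => rfl
  inv_mul_cancel f := Homeomorph.ext fun x => f.symm_apply_apply x

/-- The two-torus `T² = ℝ²/ℤ²`. -/
abbrev Torus : Type := AddCircle (1 : ℝ) × AddCircle (1 : ℝ)

/-- The vertical annulus `A = (ℝ/ℤ) × ℝ`. -/
abbrev VertAnnulus : Type := AddCircle (1 : ℝ) × ℝ

/-- The canonical covering projection `ℝ² → T²`. -/
def torusProj : ℝ × ℝ → Torus :=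
  fun p => ((p.1 : AddCircle (1 : ℝ)), (p.2 : AddCircle (1 : ℝ)))

/-- The covering projection from the vertical annulus to the torus. -/
def annProj : VertAnnulus → Torus := fun p => (p.1, (p.2 : AddCircle (1 : ℝ)))

/-- A homeomorphism is (topologically) transitive if it has a dense orbit. -/
def IsTransitive {X : Type*} [TopologicalSpace X] (f : X ≃ₜ X) : Prop :=
  ∃ z : X, Dense (Set.range fun n : ℤ => (f ^ n) z)

/-- `g` and `h` are isotopic: there is a continuous path of homeomorphisms
joining `h` (at time 0) to `g` (at time 1). -/
def Isotopic {X : Type*} [TopologicalSpace X] (g h : X → X) : Prop :=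
  ∃ H : ℝ → X → X, Continuous (fun p : ℝ × X => H p.1 p.2) ∧
    (∀ t : ℝ, ∃ e : X ≃ₜ X, H t = ⇑e) ∧ H 0 = h ∧ H 1 = g

/-- The Bernoulli shift on `Σ = {0,…,r−1}^ℤ`. -/
def bernoulliShift (r : ℕ) : (ℤ → Fin r) → (ℤ → Fin r) := fun s i => s (i + 1)

/-- `Δ` is a topological horseshoe for the homeomorphism `f`. -/
def IsTopologicalHorseshoe {X : Type*} [TopologicalSpace X] (f : X ≃ₜ X) (Δ : Set X) : Prop :=
  IsCompact Δ ∧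
  ∃ q : ℕ, 1 ≤ q ∧ ⇑(f ^ q) '' Δ = Δ ∧
    ∃ (Y : Type) (_ : TopologicalSpace Y) (_ : CompactSpace Y) (_ : T2Space Y)
      (g : Y → Y) (r : ℕ) (π₁ : Y → X) (π₂ : Y → (ℤ → Fin r)),
      2 ≤ r ∧ Continuous g ∧
      Continuous π₁ ∧ Set.range π₁ = Δ ∧ (∀ y, π₁ (g y) = (f ^ q) (π₁ y)) ∧
      (∃ B : ℕ, ∀ x : X, (π₁ ⁻¹' {x}).Finite ∧ (π₁ ⁻¹' {x}).ncard ≤ B) ∧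
      Continuous π₂ ∧ Function.Surjective π₂ ∧
      (∀ y, π₂ (g y) = bernoulliShift r (π₂ y)) ∧
      (∀ (n : ℕ) (s : ℤ → Fin r), (bernoulliShift r)^[n] s = s →
        ∃ y : Y, π₂ y = s ∧ g^[n] y = y)

/-- `f` has a topological horseshoe. -/
def HasTopologicalHorseshoe {X : Type*} [TopologicalSpace X] (f : X ≃ₜ X) : Prop :=
  ∃ Δ : Set X, IsTopologicalHorseshoe f Δ

/-- The ω-limit set `ω_f(z) = ⋂_{k≥0} closure {f^n(z) : n ≥ k}`. -/
def omegaLimitOf {X : Type*} [TopologicalSpace X] (f : X → X) (z : X) : Set X :=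
  ⋂ k : ℕ, closure ((fun n : ℕ => f^[n] z) '' Set.Ici k)

/-- The α-limit set `α_f(z) = ⋂_{k≤0} closure {f^n(z) : n ≤ k}` of a homeomorphism,
i.e. the ω-limit set of the inverse homeomorphism. -/
def alphaLimitOf {X : Type*} [TopologicalSpace X] (f : X ≃ₜ X) (z : X) : Set X :=
  omegaLimitOf (⇑f.symm) z

/-- `G` is a lift of the torus homeomorphism `g` to the plane. -/
def IsLiftR2 (g : Torus ≃ₜ Torus) (G : (ℝ × ℝ) ≃ₜ (ℝ × ℝ)) : Prop :=
  ∀ p : ℝ × ℝ, torusProj (G p) = g (torusProj p)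

/-- `H` is a lift of the torus homeomorphism `g` to the vertical annulus. -/
def IsLiftAnn (g : Torus ≃ₜ Torus) (H : VertAnnulus ≃ₜ VertAnnulus) : Prop :=
  ∀ p : VertAnnulus, annProj (H p) = g (annProj p)

/-- The Misiurewicz–Ziemian rotation set of a lift `G` of a torus homeomorphism:
all limits of sequences `(G^{n_k}(z_k) − z_k)/n_k` with `n_k → ∞`. -/
def rotSet (G : (ℝ × ℝ) ≃ₜ (ℝ × ℝ)) : Set (ℝ × ℝ) :=
  {v | ∃ (n : ℕ → ℕ) (z : ℕ → ℝ × ℝ), StrictMono n ∧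
    Filter.Tendsto (fun k => ((n k : ℝ))⁻¹ • ((G ^ (n k)) (z k) - z k))
      Filter.atTop (nhds v)}

/-- A set is a non-degenerate line segment with rational slope: it is a segment with
distinct endpoints whose direction is a real multiple of a nonzero integer vector. -/
def IsRationalSlopeSegment (ρ : Set (ℝ × ℝ)) : Prop :=
  ∃ a b : ℝ × ℝ, a ≠ b ∧ ρ = segment ℝ a b ∧
    ∃ v : ℤ × ℤ, v ≠ (0, 0) ∧ ∃ t : ℝ, b - a = t • (((v.1 : ℝ), (v.2 : ℝ)) : ℝ × ℝ)

/-- A set is a non-degenerate horizontal segment (direction `±(1,0)`). -/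
def IsHorizontalSegment (ρ : Set (ℝ × ℝ)) : Prop :=
  ∃ a b : ℝ × ℝ, a ≠ b ∧ ρ = segment ℝ a b ∧ a.2 = b.2

/-- The linear torus map induced by an integer matrix. -/
def matrixTorusMap (A : Matrix (Fin 2) (Fin 2) ℤ) : Torus → Torus :=
  fun p => (A 0 0 • p.1 + A 0 1 • p.2, A 1 0 • p.1 + A 1 1 • p.2)

/-- The linear planar map induced by an integer matrix. -/
def matMap (A : Matrix (Fin 2) (Fin 2) ℤ) : ℝ × ℝ → ℝ × ℝ :=
  fun p => ((A 0 0 : ℝ) * p.1 + (A 0 1 : ℝ) * p.2, (A 1 0 : ℝ) * p.1 + (A 1 1 : ℝ) * p.2)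

/-- `g` is isotopic to a Dehn twist: it is isotopic to the linear map induced by a matrix
`A ∈ GL(2,ℤ)` conjugate (in GL(2,ℤ)) to `[[1, m], [0, 1]]` for some `m ≠ 0`. -/
def IsotopicToDehnTwist (g : Torus ≃ₜ Torus) : Prop :=
  ∃ (m : ℤ) (A P : Matrix (Fin 2) (Fin 2) ℤ), m ≠ 0 ∧ IsUnit A.det ∧ IsUnit P.det ∧
    A * P = P * !![1, m; 0, 1] ∧ Isotopic (⇑g) (matrixTorusMap A)

/-- The vertical rotation set of an annulus homeomorphism `H`:
`ρ_V(H) = ⋂_{k≥1} closure ( ⋃_{n≥k} { pr₂(Hⁿ(z) − z)/n : z ∈ A } )`. -/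
def vertRotSet (H : VertAnnulus ≃ₜ VertAnnulus) : Set ℝ :=
  ⋂ k : ℕ, closure (⋃ n : ℕ, ⋃ _ : k + 1 ≤ n,
    {x : ℝ | ∃ z : VertAnnulus, x = (((H ^ n) z).2 - z.2) / n})

/-- `z` is a non-wandering point of `f`. -/
def IsNonWanderingPt {X : Type*} [TopologicalSpace X] (f : X → X) (z : X) : Prop :=
  ∀ U ∈ 𝓝 z, ∃ n : ℕ, 1 ≤ n ∧ (f^[n] '' U ∩ U).Nonempty

/-- The Euclidean inner product on `ℝ²`. -/
def dot2 (u v : ℝ × ℝ) : ℝ := u.1 * v.1 + u.2 * v.2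

/-- The Euclidean normalization of a vector of `ℝ²`. -/
def normalize2 (u : ℝ × ℝ) : ℝ × ℝ := (Real.sqrt (u.1 ^ 2 + u.2 ^ 2))⁻¹ • u

/-- There is a Birkhoff connection from `z₁` to `z₂` for `f`. -/
def BirkhoffConnection {X : Type*} [TopologicalSpace X] (f : X → X) (z₁ z₂ : X) : Prop :=
  ∀ W₁ ∈ 𝓝 z₁, ∀ W₂ ∈ 𝓝 z₂, ∃ n : ℕ, 1 ≤ n ∧ (W₁ ∩ f^[n] ⁻¹' W₂).Nonempty

/-- `c : ℤ/pℤ → X` is a Birkhoff cycle for `f`. -/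
def IsBirkhoffCycle {X : Type*} [TopologicalSpace X] (f : X → X) {p : ℕ} (c : ZMod p → X) :
    Prop :=
  0 < p ∧ ∀ i : ZMod p, BirkhoffConnection f (c i) (c (i + 1))

private lemma horseshoe_biUnion_bound {α β : Type*} (A : α → Set β) (B : ℕ)
    (hA : ∀ e, (A e).Finite ∧ (A e).ncard ≤ B) (T : Set α) (hT : T.Finite) :
    (⋃ e ∈ T, A e).Finite ∧ (⋃ e ∈ T, A e).ncard ≤ T.ncard * B := by
  refine Set.Finite.induction_on
    (motive := fun T _ => (⋃ e ∈ T, A e).Finite ∧ (⋃ e ∈ T, A e).ncard ≤ T.ncard * B) T hT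
    (by simp) ?_
  intro a T ha hTf ih
  rw [Set.biUnion_insert]
  refine ⟨(hA a).1.union ih.1, ?_⟩
  calc (A a ∪ ⋃ e ∈ T, A e).ncard ≤ (A a).ncard + (⋃ e ∈ T, A e).ncard :=
        Set.ncard_union_le _ _
    _ ≤ B + T.ncard * B := add_le_add (hA a).2 ih.2
    _ = (insert a T).ncard * B := by rw [Set.ncard_insert_of_notMem ha hTf]; ring

/-- If a homeomorphism lifting `f` through a covering map between locally compact Hausdorff
spaces has a topological horseshoe, then so does `f`. -/
theorem statement16 {E S : Type*} [TopologicalSpace E] [TopologicalSpace S]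
    [LocallyCompactSpace E] [T2Space E] [LocallyCompactSpace S] [T2Space S]
    (proj : E → S) (hproj : IsCoveringMap proj)
    (f : S ≃ₜ S) (F : E ≃ₜ E) (hcomm : ∀ e : E, proj (F e) = f (proj e))
    (hF : HasTopologicalHorseshoe F) :
    HasTopologicalHorseshoe f := by
  obtain ⟨Δ, hΔc, q, hq, hinv, Y, _tY, _cY, _t2Y, g, r, π₁, π₂, hr, hg, hπ₁c, hπ₁r, hπ₁g,
    ⟨B, hB⟩, hπ₂c, hπ₂s, hπ₂g, hper⟩ := hF
  -- `proj` semiconjugates all iterates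
  have hcommn : ∀ (n : ℕ) (e : E), proj ((F ^ n) e) = (f ^ n) (proj e) := by
    intro n
    induction n with
    | zero => intro e; rfl
    | succ n ih =>
      intro e
      have h1 : (F ^ (n + 1)) e = (F ^ n) (F e) := by rw [pow_succ]; rfl
      have h2 : (f ^ (n + 1)) (proj e) = (f ^ n) (f (proj e)) := by rw [pow_succ]; rfl
      rw [h1, h2, ih (F e), hcomm e]
  -- a finite cover of Δ by open sets on which proj is injective
  have hloc := hproj.isLocalHomeomorph
  choose φ hmem hφ using hloc
  obtain ⟨t, ht⟩ : ∃ t : Finset E, Δ ⊆ ⋃ e ∈ t, (φ e).source := by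
    apply hΔc.elim_finite_subcover (fun e : E => (φ e).source)
      (fun e => (φ e).open_source)
    intro a _
    exact Set.mem_iUnion.mpr ⟨a, hmem a⟩
  -- the fibers of proj over Δ are finite, with cardinality at most t.card
  have hfib : ∀ x : S, (Δ ∩ proj ⁻¹' {x}).Finite ∧ (Δ ∩ proj ⁻¹' {x}).ncard ≤ t.card := by
    intro x
    have hι : ∀ p : (Δ ∩ proj ⁻¹' {x} : Set E), ∃ i : t, (p : E) ∈ (φ (i : E)).source := by
      intro p
      have h := ht p.2.1
      simp only [Set.mem_iUnion] at h
      obtain ⟨i, hi, hpi⟩ := h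
      exact ⟨⟨i, hi⟩, hpi⟩
    choose ι hι using hι
    have hinj : Function.Injective ι := by
      intro p p' h
      have h1 : (p : E) ∈ (φ (ι p : E)).source := hι p
      have h2 : (p' : E) ∈ (φ (ι p : E)).source := by rw [h]; exact hι p'
      apply Subtype.ext
      apply (φ (ι p : E)).injOn h1 h2
      have hpp' : proj (p : E) = proj (p' : E) := by
        have e1 : proj (p : E) = x := p.2.2
        have e2 : proj (p' : E) = x := p'.2.2
        rw [e1, e2]
      rw [← hφ (ι p : E)]
      exact hpp'
    have hfin : Finite (Δ ∩ proj ⁻¹' {x} : Set E) := Finite.of_injective ι hinj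
    refine ⟨Set.finite_coe_iff.mp hfin, ?_⟩
    calc (Δ ∩ proj ⁻¹' {x}).ncard = Nat.card (Δ ∩ proj ⁻¹' {x} : Set E) :=
          (Nat.card_coe_set_eq _).symm
      _ ≤ Nat.card t := Nat.card_le_card_of_injective ι hinj
      _ = t.card := Nat.card_eq_finsetCard t
  refine ⟨proj '' Δ, hΔc.image hproj.continuous, q, hq, ?_, Y, _tY, _cY, _t2Y, g, r,
    fun y => proj (π₁ y), π₂, hr, hg, hproj.continuous.comp hπ₁c, ?_, ?_, ?_,
    hπ₂c, hπ₂s, hπ₂g, hper⟩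
  · -- invariance
    calc ⇑(f ^ q) '' (proj '' Δ) = (fun e => (f ^ q) (proj e)) '' Δ := Set.image_image _ _ _
      _ = (fun e => proj ((F ^ q) e)) '' Δ := by
          refine congrArg (· '' Δ) ?_
          funext e
          exact (hcommn q e).symm
      _ = proj '' (⇑(F ^ q) '' Δ) := (Set.image_image _ _ _).symm
      _ = proj '' Δ := by rw [hinv]
  · -- range
    have : (fun y => proj (π₁ y)) = proj ∘ π₁ := rfl
    rw [this, Set.range_comp, hπ₁r]
  · -- semiconjugacy
    intro y
    show proj (π₁ (g y)) = (f ^ q) (proj (π₁ y))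
    rw [hπ₁g y, hcommn q (π₁ y)]
  · -- bounded fibers
    refine ⟨t.card * B, fun x => ?_⟩
    have hdecomp : (fun y => proj (π₁ y)) ⁻¹' {x} = ⋃ e ∈ (Δ ∩ proj ⁻¹' {x}), π₁ ⁻¹' {e} := by
      ext y
      simp only [Set.mem_preimage, Set.mem_singleton_iff, Set.mem_iUnion, Set.mem_inter_iff]
      constructor
      · intro hy
        refine ⟨π₁ y, ⟨?_, hy⟩, rfl⟩
        rw [← hπ₁r]
        exact ⟨y, rfl⟩
      · rintro ⟨e, ⟨_, he⟩, rfl⟩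
        exact he
    rw [hdecomp]
    obtain ⟨h1, h2⟩ := horseshoe_biUnion_bound (fun e => π₁ ⁻¹' {e}) B
      (fun e => hB e) (Δ ∩ proj ⁻¹' {x}) (hfib x).1
    refine ⟨h1, h2.trans ?_⟩
    exact Nat.mul_le_mul_right B (hfib x).2
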